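/- Weighted summation-by-parts inequality for the upwind update (derivation of (1.23)): let M ≥ 2, Δx = 1/M, x_j = j·Δx, μ > 0 and κ ∈ ℝ. Let u_0,…,u_M and D_1,…,D_M be real numbers with 0 ≤ D_j ≤ 1 for all j, u_0 = κ·u_M, and set D_{M+1} := D_M. Define v_j := (1 − D_j)·u_j + D_j·u_{j−1} for j = 1,…,M. Then Σ_{j=1}^M (v_j² − u_j²)·e^{−μ·x_j} ≤ Σ_{j=1}^M u_j²·(D_{j+1}·e^{−μ·Δx} − D_j)·e^{−μ·x_j} + (D_1·κ²·e^{−μ·x_1} − D_{M+1}·e^{−μ·(x_M+Δx)})·u_M². -/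
import Mathlib


/-- Weighted summation-by-parts inequality for the upwind update
(derivation of (1.23) in the paper), with `x_j = j·Δx`, `Δx = 1/M`, `x_0 = 0`,
`x_M = 1`, and the ghost value `D_{M+1} := D_M`. -/
theorem weighted_summation_by_parts_upwind
    (M : ℕ) (hM : 2 ≤ M)
    (Δx μ κ : ℝ) (hΔx : Δx = 1 / M) (hμ : 0 < μ)
    (u D v : ℕ → ℝ)
    (hD : ∀ j, 1 ≤ j → j ≤ M → 0 ≤ D j ∧ D j ≤ 1)
    (hu : u 0 = κ * u M)
    (hDM : D (M+1) = D M)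
    (hv : ∀ j, 1 ≤ j → j ≤ M → v j = (1 - D j) * u j + D j * u (j-1)) :
    ∑ j ∈ Finset.Icc 1 M, ((v j) ^ 2 - (u j) ^ 2) * Real.exp (-μ * ((j : ℝ) * Δx)) ≤
      ∑ j ∈ Finset.Icc 1 M,
        (u j) ^ 2 * (D (j+1) * Real.exp (-μ * Δx) - D j) * Real.exp (-μ * ((j : ℝ) * Δx)) +
      (D 1 * κ ^ 2 * Real.exp (-μ * ((1 : ℝ) * Δx)) -
        D (M+1) * Real.exp (-μ * ((M : ℝ) * Δx + Δx))) * (u M) ^ 2 := by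
  set E : ℕ → ℝ := fun j => Real.exp (-μ * ((j : ℝ) * Δx)) with hE
  have hEsucc : ∀ j : ℕ, E (j+1) = Real.exp (-μ * Δx) * E j := by
    intro j
    simp only [hE, Nat.cast_add, Nat.cast_one]
    rw [← Real.exp_add]
    ring_nf
  -- Step 1: convexity bound
  have step1 : ∑ j ∈ Finset.Icc 1 M, ((v j) ^ 2 - (u j) ^ 2) * Real.exp (-μ * ((j : ℝ) * Δx)) ≤
      ∑ j ∈ Finset.Icc 1 M, (D j * (u (j-1)) ^ 2 * E j - D j * (u j) ^ 2 * E j) := by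
    apply Finset.sum_le_sum
    intro j hj
    simp only [Finset.mem_Icc] at hj
    obtain ⟨h0, h1⟩ := hD j hj.1 hj.2
    have hvj := hv j hj.1 hj.2
    have hEpos : (0:ℝ) < E j := Real.exp_pos _
    have key : (v j) ^ 2 - (u j) ^ 2 ≤ D j * (u (j-1)) ^ 2 - D j * (u j) ^ 2 := by
      rw [hvj]; nlinarith [sq_nonneg (u j - u (j-1)), mul_nonneg h0 (sq_nonneg (u j - u (j-1)))]
    calc ((v j) ^ 2 - (u j) ^ 2) * Real.exp (-μ * ((j : ℝ) * Δx))
        = ((v j) ^ 2 - (u j) ^ 2) * E j := rfl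
      _ ≤ (D j * (u (j-1)) ^ 2 - D j * (u j) ^ 2) * E j :=
          mul_le_mul_of_nonneg_right key hEpos.le
      _ = _ := by ring
  -- Step 2: summation by parts (index shift)
  set g : ℕ → ℝ := fun i => D (i+1) * (u i) ^ 2 * E (i+1) with hg
  obtain ⟨N, rfl⟩ : ∃ N, M = N + 1 := ⟨M - 1, by omega⟩
  have shift : ∑ j ∈ Finset.Icc 1 (N+1), D j * (u (j-1)) ^ 2 * E j
      = ∑ j ∈ Finset.Icc 1 (N+1), D (j+1) * (u j) ^ 2 * E (j+1)
        + g 0 - g (N+1) := by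
    have hL : ∑ j ∈ Finset.Icc 1 (N+1), D j * (u (j-1)) ^ 2 * E j
        = ∑ i ∈ Finset.range (N+1), g i := by
      rw [← Finset.Ico_add_one_right_eq_Icc, Finset.sum_Ico_eq_sum_range]
      apply Finset.sum_congr (by norm_num)
      intro i _
      simp [hg, Nat.add_comm 1 i]
    have hR : ∑ j ∈ Finset.Icc 1 (N+1), D (j+1) * (u j) ^ 2 * E (j+1)
        = ∑ i ∈ Finset.range (N+1), g (i+1) := by
      rw [← Finset.Ico_add_one_right_eq_Icc, Finset.sum_Ico_eq_sum_range]
      apply Finset.sum_congr (by norm_num)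
      intro i _
      simp [hg, Nat.add_comm 1 i]
    rw [hL, hR, Finset.sum_range_succ' g N, Finset.sum_range_succ (fun i => g (i+1)) N]
    ring
  refine le_trans step1 ?_
  have expand : ∑ j ∈ Finset.Icc 1 (N+1), (D j * (u (j-1)) ^ 2 * E j - D j * (u j) ^ 2 * E j)
      = (∑ j ∈ Finset.Icc 1 (N+1), D j * (u (j-1)) ^ 2 * E j)
        - ∑ j ∈ Finset.Icc 1 (N+1), D j * (u j) ^ 2 * E j := by
    rw [Finset.sum_sub_distrib]
  rw [expand, shift]
  have hsum : ∑ j ∈ Finset.Icc 1 (N+1), D (j+1) * (u j) ^ 2 * E (j+1)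
        - ∑ j ∈ Finset.Icc 1 (N+1), D j * (u j) ^ 2 * E j
      = ∑ j ∈ Finset.Icc 1 (N+1),
          (u j) ^ 2 * (D (j+1) * Real.exp (-μ * Δx) - D j) * E j := by
    rw [← Finset.sum_sub_distrib]
    apply Finset.sum_congr rfl
    intro j _
    rw [hEsucc j]
    ring
  have hbdy : g 0 - g (N+1)
      = (D 1 * κ ^ 2 * E 1 - D (N+1+1) * Real.exp (-μ * (((N+1 : ℕ) : ℝ) * Δx + Δx))) * (u (N+1)) ^ 2 := by
    have hEend : E (N+1+1) = Real.exp (-μ * (((N+1 : ℕ) : ℝ) * Δx + Δx)) := by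
      simp only [hE]
      push_cast
      ring_nf
    simp only [hg, Nat.zero_add, hu, hEend]
    ring
  have hE1 : Real.exp (-μ * ((1 : ℝ) * Δx)) = E 1 := by simp [hE]
  rw [hE1]
  linarith [hsum, hbdy]
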